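/- Let σ ∈ 𝕋ⁿₘ and f ∈ I be such that f is S-irreducible with respect to σ and there exists u ∈ Pᵐ \ {0} with v(u) = f and LT(u) = σ. Then exactly one of the following holds: (a) f = 0 and σ ∈ LT(Syz F); or (b) f ≠ 0, σ ∈ NS(Syz F), and σ = S(f) = φ(LT(f)). -/

import Mathlib

open MvPolynomial

namespace F5

noncomputable section
open scoped Classical

/-- Monomials (power products) in `n` variables, represented by exponent vectors. -/
abbrev Mon (n : ℕ) : Type := Fin n →₀ ℕ

/-- Module terms `t·eₗ` of the free module `Pᵐ`. -/
abbrev MTerm (n m : ℕ) : Type := (Fin n →₀ ℕ) × Fin m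

/-- Action of a monomial on a module term: `u • (t eₗ) = (u t) eₗ`. -/
def mact {n m : ℕ} (u : Mon n) (σ : MTerm n m) : MTerm n m := (u + σ.1, σ.2)

/-- An admissible order on monomials: a linear order with `1 ≤ t` and
compatibility with multiplication. -/
structure AdmissibleOrder (n : ℕ) where
  ord : LinearOrder (Mon n)
  one_le : ∀ t : Mon n, ord.le 0 t
  mul_lt_mul : ∀ s t u : Mon n, ord.lt s t → ord.lt (u + s) (u + t)

/-- An admissible module order on module terms: a linear well-order compatible
with the monomial action, and such that `σ ≤ u σ`. -/
structure ModuleOrder (n m : ℕ) where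
  ord : LinearOrder (MTerm n m)
  wf : WellFounded ord.lt
  mul_lt_mul : ∀ (σ τ : MTerm n m) (u : Mon n), ord.lt σ τ → ord.lt (mact u σ) (mact u τ)
  le_mul : ∀ (σ : MTerm n m) (u : Mon n), ord.le σ (mact u σ)

variable {k : Type*} [Field k] {n m : ℕ}

/-- The leading monomial of a polynomial with respect to `μ` (junk value `0` for `f = 0`). -/
noncomputable def pLT (μ : AdmissibleOrder n) (f : MvPolynomial (Fin n) k) : Mon n :=
  if h : f.support.Nonempty then @Finset.max' _ μ.ord f.support h else 0

/-- The leading coefficient of a polynomial with respect to `μ`. -/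
noncomputable def pLC (μ : AdmissibleOrder n) (f : MvPolynomial (Fin n) k) : k :=
  f.coeff (pLT μ f)

/-- The set (finset) of module terms occurring in an element of `Pᵐ`. -/
noncomputable def msupport (u : Fin m → MvPolynomial (Fin n) k) : Finset (MTerm n m) :=
  letI := Classical.decEq (MTerm n m)
  Finset.univ.biUnion fun l => (u l).support.image fun t => (t, l)

/-- A junk default module term (needs `m ≠ 0`). -/
def mdefault [NeZero m] : MTerm n m := (0, ⟨0, Nat.pos_of_ne_zero (NeZero.ne m)⟩)

/-- The leading module term of a nonzero element of `Pᵐ` with respect to `μ'`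
(junk value for `0`). -/
noncomputable def mLT [NeZero m] (μ' : ModuleOrder n m) (u : Fin m → MvPolynomial (Fin n) k) :
    MTerm n m :=
  if h : (msupport u).Nonempty then @Finset.max' _ μ'.ord _ h else mdefault

/-- The map `v : Pᵐ → P`, `v(eᵢ) = fᵢ`. -/
noncomputable def vmap (F : Fin m → MvPolynomial (Fin n) k)
    (u : Fin m → MvPolynomial (Fin n) k) : MvPolynomial (Fin n) k :=
  ∑ i, u i * F i

/-- The ideal `I = (f₁, …, fₘ)`. -/
noncomputable def idealI (F : Fin m → MvPolynomial (Fin n) k) : Ideal (MvPolynomial (Fin n) k) :=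
  Ideal.span (Set.range F)

/-- `LT(Syz F)`: leading module terms of nonzero syzygies of `F`. -/
def LTSyz [NeZero m] (μ' : ModuleOrder n m) (F : Fin m → MvPolynomial (Fin n) k) :
    Set (MTerm n m) :=
  {σ | ∃ s : Fin m → MvPolynomial (Fin n) k, s ≠ 0 ∧ vmap F s = 0 ∧ mLT μ' s = σ}

/-- The signature `S(f)`: the `μ'`-minimum of `{LT(u) : v(u) = f}` (junk for `f = 0` or
`f ∉ I`). -/
noncomputable def sig [NeZero m] (μ' : ModuleOrder n m) (F : Fin m → MvPolynomial (Fin n) k)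
    (f : MvPolynomial (Fin n) k) : MTerm n m :=
  if hne : {σ : MTerm n m |
      ∃ u : Fin m → MvPolynomial (Fin n) k, u ≠ 0 ∧ vmap F u = f ∧ mLT μ' u = σ}.Nonempty
  then μ'.wf.min _ hne else mdefault

/-- `f` S-reduces to `g` with `h`, with respect to `σ`. -/
noncomputable def SReduces [NeZero m] (μ : AdmissibleOrder n) (μ' : ModuleOrder n m)
    (F : Fin m → MvPolynomial (Fin n) k)
    (f h g : MvPolynomial (Fin n) k) (σ : MTerm n m) : Prop :=
  ∃ (t : Mon n) (α : k), α ≠ 0 ∧ g = f - (monomial t α) * h ∧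
    (g = 0 ∨ μ.ord.lt (pLT μ g) (pLT μ f)) ∧
    μ'.ord.lt (sig μ' F ((monomial t (1 : k)) * h)) σ

/-- `f` is S-irreducible with respect to `σ`. -/
noncomputable def SIrr [NeZero m] (μ : AdmissibleOrder n) (μ' : ModuleOrder n m)
    (F : Fin m → MvPolynomial (Fin n) k) (f : MvPolynomial (Fin n) k) (σ : MTerm n m) : Prop :=
  f = 0 ∨ ¬ ∃ h : MvPolynomial (Fin n) k, h ∈ idealI F ∧ h ≠ 0 ∧
    ∃ g : MvPolynomial (Fin n) k, SReduces μ μ' F f h g σ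

/-- `G` is an S-Gröbner basis (of `I` w.r.t. `μ`, `F`, `μ'`). -/
noncomputable def IsSGB [NeZero m] (μ : AdmissibleOrder n) (μ' : ModuleOrder n m)
    (F : Fin m → MvPolynomial (Fin n) k) (G : Set (MvPolynomial (Fin n) k)) : Prop :=
  (∀ g ∈ G, g ∈ idealI F ∧ g ≠ 0) ∧
  ∀ f : MvPolynomial (Fin n) k, f ∈ idealI F → f ≠ 0 → SIrr μ μ' F f (sig μ' F f) →
    ∃ g ∈ G, ∃ t : Mon n,
      pLT μ ((monomial t (1 : k)) * g) = pLT μ f ∧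
      sig μ' F ((monomial t (1 : k)) * g) = sig μ' F f

/-- `LT(I)`: the set of leading monomials of nonzero elements of `I`. -/
def LTIdeal (μ : AdmissibleOrder n) (F : Fin m → MvPolynomial (Fin n) k) : Set (Mon n) :=
  {t | ∃ f : MvPolynomial (Fin n) k, f ∈ idealI F ∧ f ≠ 0 ∧ pLT μ f = t}

/-- `φ(t)`: the `μ'`-minimum signature of nonzero elements of `I` with leading monomial `t`. -/
noncomputable def phi [NeZero m] (μ : AdmissibleOrder n) (μ' : ModuleOrder n m)
    (F : Fin m → MvPolynomial (Fin n) k) (t : Mon n) : MTerm n m :=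
  if hne : {σ : MTerm n m | ∃ f : MvPolynomial (Fin n) k,
      f ∈ idealI F ∧ f ≠ 0 ∧ pLT μ f = t ∧ sig μ' F f = σ}.Nonempty
  then μ'.wf.min _ hne else mdefault

/-- `f` is a primitive S-irreducible polynomial. -/
noncomputable def PrimSIrr [NeZero m] (μ : AdmissibleOrder n) (μ' : ModuleOrder n m)
    (F : Fin m → MvPolynomial (Fin n) k) (f : MvPolynomial (Fin n) k) : Prop :=
  f ∈ idealI F ∧ f ≠ 0 ∧ SIrr μ μ' F f (sig μ' F f) ∧
  ¬ ∃ (f' : MvPolynomial (Fin n) k) (t : Mon n),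
      f' ∈ idealI F ∧ f' ≠ 0 ∧ t ≠ 0 ∧ SIrr μ μ' F f' (sig μ' F f') ∧
      pLT μ ((monomial t (1 : k)) * f') = pLT μ f ∧
      sig μ' F ((monomial t (1 : k)) * f') = sig μ' F f

/-- The lcm of two monomials (pointwise maximum of exponents). -/
def lcmMon {n : ℕ} (s t : Mon n) : Mon n := t + (s - t)

/-- The term `u₁ = lcm(LT g₁, LT g₂)/(LC g₁ · LT g₁)` (when the first argument is `g₁`). -/
noncomputable def uterm (μ : AdmissibleOrder n) (g₁ g₂ : MvPolynomial (Fin n) k) :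
    MvPolynomial (Fin n) k :=
  monomial (lcmMon (pLT μ g₁) (pLT μ g₂) - pLT μ g₁) (pLC μ g₁)⁻¹

/-- The S-polynomial of `g₁` and `g₂`. -/
noncomputable def Spol (μ : AdmissibleOrder n) (g₁ g₂ : MvPolynomial (Fin n) k) :
    MvPolynomial (Fin n) k :=
  uterm μ g₁ g₂ * g₁ - uterm μ g₂ g₁ * g₂

/-- `(g₁, g₂)` is a normal pair. -/
noncomputable def NormalPair [NeZero m] (μ : AdmissibleOrder n) (μ' : ModuleOrder n m)
    (F : Fin m → MvPolynomial (Fin n) k) (g₁ g₂ : MvPolynomial (Fin n) k) : Prop :=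
  PrimSIrr μ μ' F g₁ ∧ PrimSIrr μ μ' F g₂ ∧
  sig μ' F (uterm μ g₁ g₂ * g₁) =
    mact (lcmMon (pLT μ g₁) (pLT μ g₂) - pLT μ g₁) (sig μ' F g₁) ∧
  sig μ' F (uterm μ g₂ g₁ * g₂) =
    mact (lcmMon (pLT μ g₂) (pLT μ g₁) - pLT μ g₂) (sig μ' F g₂) ∧
  sig μ' F (uterm μ g₁ g₂ * g₁) ≠ sig μ' F (uterm μ g₂ g₁ * g₂)


end
end F5

open F5 MvPolynomial

section Aux

variable {k : Type*} [Field k] {n m : ℕ} [NeZero m]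

lemma pLT_mem_support (μ : AdmissibleOrder n) {f : MvPolynomial (Fin n) k} (hf : f ≠ 0) :
    pLT μ f ∈ f.support := by
  have h : f.support.Nonempty := by
    rw [Finset.nonempty_iff_ne_empty]
    simpa [MvPolynomial.support_eq_empty] using hf
  rw [pLT, dif_pos h]
  exact @Finset.max'_mem _ μ.ord _ h

lemma le_pLT (μ : AdmissibleOrder n) {f : MvPolynomial (Fin n) k} {t : Mon n}
    (ht : t ∈ f.support) : μ.ord.le t (pLT μ f) := by
  have h : f.support.Nonempty := ⟨t, ht⟩
  rw [pLT, dif_pos h]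
  exact @Finset.le_max' _ μ.ord _ _ ht

lemma pLC_ne_zero (μ : AdmissibleOrder n) {f : MvPolynomial (Fin n) k} (hf : f ≠ 0) :
    pLC μ f ≠ 0 := by
  have := pLT_mem_support μ hf
  rwa [MvPolynomial.mem_support_iff] at this

lemma pLT_lt_of_forall (μ : AdmissibleOrder n) {g : MvPolynomial (Fin n) k} (hg : g ≠ 0)
    {s : Mon n} (h : ∀ t ∈ g.support, μ.ord.lt t s) : μ.ord.lt (pLT μ g) s :=
  h _ (pLT_mem_support μ hg)

/-- cancellation for polynomials -/
lemma pLT_cancel (μ : AdmissibleOrder n) {f f' : MvPolynomial (Fin n) k}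
    (hf : f ≠ 0) (hf' : f' ≠ 0) (hlt : pLT μ f' = pLT μ f) :
    f - MvPolynomial.C (pLC μ f * (pLC μ f')⁻¹) * f' = 0 ∨
      μ.ord.lt (pLT μ (f - MvPolynomial.C (pLC μ f * (pLC μ f')⁻¹) * f')) (pLT μ f) := by
  set g := f - MvPolynomial.C (pLC μ f * (pLC μ f')⁻¹) * f' with hg
  by_cases hg0 : g = 0
  · exact Or.inl hg0
  · refine Or.inr (pLT_lt_of_forall μ hg0 fun t ht => ?_)
    have hsub : t ∈ f.support ∪ f'.support := by
      by_contra hcon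
      simp only [Finset.mem_union, not_or] at hcon
      have : g.coeff t = 0 := by
        rw [hg, MvPolynomial.coeff_sub, MvPolynomial.coeff_C_mul,
          MvPolynomial.notMem_support_iff.mp hcon.1,
          MvPolynomial.notMem_support_iff.mp hcon.2, mul_zero, sub_zero]
      exact MvPolynomial.mem_support_iff.mp ht this
    have hle : μ.ord.le t (pLT μ f) := by
      rcases Finset.mem_union.mp hsub with h1 | h1
      · exact le_pLT μ h1
      · exact hlt ▸ le_pLT μ h1
    have hne : t ≠ pLT μ f := by
      intro he
      have : g.coeff t = 0 := by
        have h2 : MvPolynomial.coeff (pLT μ f) f' = pLC μ f' := by rw [pLC, hlt]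
        rw [hg, MvPolynomial.coeff_sub, MvPolynomial.coeff_C_mul, he, h2,
          show f.coeff (pLT μ f) = pLC μ f from rfl, mul_assoc,
          inv_mul_cancel₀ (pLC_ne_zero μ hf'), mul_one, sub_self]
      exact MvPolynomial.mem_support_iff.mp ht this
    exact @lt_of_le_of_ne _ μ.ord.toPartialOrder _ _ hle hne

lemma mem_msupport_iff {u : Fin m → MvPolynomial (Fin n) k} {τ : MTerm n m} :
    τ ∈ msupport u ↔ τ.1 ∈ (u τ.2).support := by
  classical
  constructor
  · intro h
    simp only [msupport, Finset.mem_biUnion, Finset.mem_univ, true_and,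
      Finset.mem_image] at h
    obtain ⟨l, t, ht, he⟩ := h
    cases he
    exact ht
  · intro h
    simp only [msupport, Finset.mem_biUnion, Finset.mem_univ, true_and, Finset.mem_image]
    exact ⟨τ.2, τ.1, h, rfl⟩

lemma msupport_nonempty {u : Fin m → MvPolynomial (Fin n) k} (hu : u ≠ 0) :
    (msupport u).Nonempty := by
  have : ∃ l, u l ≠ 0 := by
    by_contra hcon
    push_neg at hcon
    exact hu (funext hcon)
  obtain ⟨l, hl⟩ := this
  have h : (u l).support.Nonempty := by
    rw [Finset.nonempty_iff_ne_empty]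
    simpa [MvPolynomial.support_eq_empty] using hl
  obtain ⟨t, ht⟩ := h
  exact ⟨(t, l), mem_msupport_iff.mpr ht⟩

lemma mLT_mem (μ' : ModuleOrder n m) {u : Fin m → MvPolynomial (Fin n) k} (hu : u ≠ 0) :
    mLT μ' u ∈ msupport u := by
  have h := msupport_nonempty hu
  rw [mLT, dif_pos h]
  exact @Finset.max'_mem _ μ'.ord _ h

lemma le_mLT (μ' : ModuleOrder n m) {u : Fin m → MvPolynomial (Fin n) k} {τ : MTerm n m}
    (hτ : τ ∈ msupport u) : μ'.ord.le τ (mLT μ' u) := by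
  have h : (msupport u).Nonempty := ⟨τ, hτ⟩
  rw [mLT, dif_pos h]
  exact @Finset.le_max' _ μ'.ord _ _ hτ

lemma vmap_sub (F u s : Fin m → MvPolynomial (Fin n) k) (c : k) :
    vmap F (u - fun i => MvPolynomial.C c * s i) = vmap F u - MvPolynomial.C c * vmap F s := by
  simp only [vmap, Pi.sub_apply, sub_mul, Finset.sum_sub_distrib, Finset.mul_sum, mul_assoc]

/-- cancellation for module elements -/
lemma mLT_cancel (μ' : ModuleOrder n m) {u s : Fin m → MvPolynomial (Fin n) k}
    (hu : u ≠ 0) (hs : s ≠ 0) (hlt : mLT μ' s = mLT μ' u) :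
    ∀ τ ∈ msupport (u - fun i => MvPolynomial.C
        ((u (mLT μ' u).2).coeff (mLT μ' u).1 * ((s (mLT μ' u).2).coeff (mLT μ' u).1)⁻¹) * s i),
      μ'.ord.lt τ (mLT μ' u) := by
  set σ := mLT μ' u with hσ
  set c := (u σ.2).coeff σ.1 * ((s σ.2).coeff σ.1)⁻¹ with hc
  intro τ hτ
  rw [mem_msupport_iff] at hτ
  simp only [Pi.sub_apply] at hτ
  have hsub : τ.1 ∈ (u τ.2).support ∪ (s τ.2).support := by
    by_contra hcon
    simp only [Finset.mem_union, not_or] at hcon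
    have : ((u τ.2) - MvPolynomial.C c * (s τ.2)).coeff τ.1 = 0 := by
      rw [MvPolynomial.coeff_sub, MvPolynomial.coeff_C_mul,
        MvPolynomial.notMem_support_iff.mp hcon.1,
        MvPolynomial.notMem_support_iff.mp hcon.2, mul_zero, sub_zero]
    exact MvPolynomial.mem_support_iff.mp hτ this
  have hle : μ'.ord.le τ σ := by
    rcases Finset.mem_union.mp hsub with h1 | h1
    · exact le_mLT μ' (mem_msupport_iff.mpr h1)
    · exact hlt ▸ le_mLT μ' (mem_msupport_iff.mpr h1)
  have hne : τ ≠ σ := by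
    intro he
    have hscoeff : (s σ.2).coeff σ.1 ≠ 0 := by
      have := mLT_mem μ' hs
      rw [hlt, mem_msupport_iff] at this
      exact MvPolynomial.mem_support_iff.mp this
    have : ((u τ.2) - MvPolynomial.C c * (s τ.2)).coeff τ.1 = 0 := by
      rw [he, MvPolynomial.coeff_sub, MvPolynomial.coeff_C_mul, hc, mul_assoc,
        inv_mul_cancel₀ hscoeff, mul_one, sub_self]
    exact MvPolynomial.mem_support_iff.mp hτ this
  exact @lt_of_le_of_ne _ μ'.ord.toPartialOrder _ _ hle hne

lemma sig_set_nonempty (μ' : ModuleOrder n m) (F : Fin m → MvPolynomial (Fin n) k)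
    {f u : Fin m → MvPolynomial (Fin n) k → MvPolynomial (Fin n) k} : True := trivial

lemma sig_eq_min (μ' : ModuleOrder n m) (F : Fin m → MvPolynomial (Fin n) k)
    {f : MvPolynomial (Fin n) k} {u : Fin m → MvPolynomial (Fin n) k}
    (hune : u ≠ 0) (hvu : vmap F u = f) :
    (∃ w : Fin m → MvPolynomial (Fin n) k, w ≠ 0 ∧ vmap F w = f ∧ mLT μ' w = sig μ' F f) ∧
    μ'.ord.le (sig μ' F f) (mLT μ' u) := by
  letI := μ'.ord
  have hne : {σ : MTerm n m |
      ∃ w : Fin m → MvPolynomial (Fin n) k, w ≠ 0 ∧ vmap F w = f ∧ mLT μ' w = σ}.Nonempty :=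
    ⟨mLT μ' u, u, hune, hvu, rfl⟩
  rw [sig, dif_pos hne]
  constructor
  · exact μ'.wf.min_mem _ hne
  · exact not_lt.mp (μ'.wf.not_lt_min {σ : MTerm n m |
      ∃ w : Fin m → MvPolynomial (Fin n) k, w ≠ 0 ∧ vmap F w = f ∧ mLT μ' w = σ} ⟨u, hune, hvu, rfl⟩)

lemma phi_eq_min (μ : AdmissibleOrder n) (μ' : ModuleOrder n m)
    (F : Fin m → MvPolynomial (Fin n) k) {f : MvPolynomial (Fin n) k}
    (hfI : f ∈ idealI F) (hf0 : f ≠ 0) :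
    (∃ f' : MvPolynomial (Fin n) k, f' ∈ idealI F ∧ f' ≠ 0 ∧ pLT μ f' = pLT μ f ∧
        sig μ' F f' = phi μ μ' F (pLT μ f)) ∧
    μ'.ord.le (phi μ μ' F (pLT μ f)) (sig μ' F f) := by
  letI := μ'.ord
  have hne : {σ : MTerm n m | ∃ g : MvPolynomial (Fin n) k,
      g ∈ idealI F ∧ g ≠ 0 ∧ pLT μ g = pLT μ f ∧ sig μ' F g = σ}.Nonempty :=
    ⟨sig μ' F f, f, hfI, hf0, rfl, rfl⟩
  rw [phi, dif_pos hne]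
  constructor
  · exact μ'.wf.min_mem _ hne
  · exact not_lt.mp (μ'.wf.not_lt_min {σ : MTerm n m | ∃ g : MvPolynomial (Fin n) k,
      g ∈ idealI F ∧ g ≠ 0 ∧ pLT μ g = pLT μ f ∧ sig μ' F g = σ} ⟨f, hfI, hf0, rfl, rfl⟩)

end Aux

/-- S-reduction theorem: if `f ∈ I` is S-irreducible with respect to `σ` and
`f = v(u)` for some `u ≠ 0` with `LT(u) = σ`, then exactly one of the following holds:
(a) `f = 0` and `σ ∈ LT(Syz F)`; (b) `f ≠ 0`, `σ ∈ NS(Syz F)`, and `σ = S(f) = φ(LT(f))`. -/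
theorem stmt_7 {k : Type*} [Field k] {n m : ℕ} [NeZero m]
    (μ : AdmissibleOrder n) (μ' : ModuleOrder n m)
    (F : Fin m → MvPolynomial (Fin n) k)
    (σ : MTerm n m) (f : MvPolynomial (Fin n) k)
    (hfI : f ∈ idealI F)
    (hirr : SIrr μ μ' F f σ)
    (hu : ∃ u : Fin m → MvPolynomial (Fin n) k, u ≠ 0 ∧ vmap F u = f ∧ mLT μ' u = σ) :
    Xor' (f = 0 ∧ σ ∈ LTSyz μ' F)
      (f ≠ 0 ∧ σ ∉ LTSyz μ' F ∧ σ = sig μ' F f ∧ sig μ' F f = phi μ μ' F (pLT μ f)) := by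
  obtain ⟨u, hune, hvu, hmu⟩ := hu
  by_cases hf0 : f = 0
  · exact Or.inl ⟨⟨hf0, u, hune, by rw [hvu, hf0], hmu⟩, fun h => h.1 hf0⟩
  · letI := μ'.ord
    have hirr' : ¬ ∃ h, h ∈ idealI F ∧ h ≠ 0 ∧
        ∃ g, SReduces μ μ' F f h g σ := by
      rcases hirr with h | h
      · exact absurd h hf0
      · exact h
    have hsig := sig_eq_min μ' F hune hvu
    have hsle : μ'.ord.le (sig μ' F f) σ := hmu ▸ hsig.2
    have honeb : ∀ h : MvPolynomial (Fin n) k,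
        (monomial (0 : Mon n) (1 : k)) * h = h := by
      intro h; rw [MvPolynomial.monomial_zero', MvPolynomial.C_1, one_mul]
    -- σ = sig f
    have hσsig : σ = sig μ' F f := by
      by_contra hne
      have hlt : μ'.ord.lt (sig μ' F f) σ :=
        @lt_of_le_of_ne _ μ'.ord.toPartialOrder _ _ hsle fun h => hne h.symm
      exact hirr' ⟨f, hfI, hf0, 0,
        0, 1, one_ne_zero, by rw [honeb, sub_self], Or.inl rfl, by rw [honeb]; exact hlt⟩
    -- sig f = phi (pLT f)
    have hphi := phi_eq_min μ μ' F hfI hf0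
    have hsigphi : sig μ' F f = phi μ μ' F (pLT μ f) := by
      by_contra hne
      have hlt : μ'.ord.lt (phi μ μ' F (pLT μ f)) (sig μ' F f) :=
        @lt_of_le_of_ne _ μ'.ord.toPartialOrder _ _ hphi.2 fun h => hne h.symm
      obtain ⟨f', hf'I, hf'0, hf'lt, hf'sig⟩ := hphi.1
      refine hirr' ⟨f', hf'I, hf'0,
        f - MvPolynomial.C (pLC μ f * (pLC μ f')⁻¹) * f',
        0, pLC μ f * (pLC μ f')⁻¹,
        mul_ne_zero (pLC_ne_zero μ hf0) (inv_ne_zero (pLC_ne_zero μ hf'0)),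
        by rw [MvPolynomial.monomial_zero'], pLT_cancel μ hf0 hf'0 hf'lt, ?_⟩
      rw [honeb, hf'sig]
      exact hσsig ▸ hlt
    -- σ ∉ LTSyz
    have hnotsyz : σ ∉ LTSyz μ' F := by
      rintro ⟨s, hs0, hvs, hms⟩
      have hlt' : mLT μ' s = mLT μ' u := by rw [hms, hmu]
      set u' := u - fun i => MvPolynomial.C
        ((u (mLT μ' u).2).coeff (mLT μ' u).1 *
          ((s (mLT μ' u).2).coeff (mLT μ' u).1)⁻¹) * s i with hu'
      have hvu' : vmap F u' = f := by
        rw [hu', vmap_sub, hvu, hvs, mul_zero, sub_zero]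
      have hu'0 : u' ≠ 0 := by
        intro h0
        apply hf0
        rw [← hvu', h0]
        simp [vmap]
      have hcan := mLT_cancel μ' hune hs0 hlt'
      have h1 : μ'.ord.lt (mLT μ' u') (mLT μ' u) := hcan _ (mLT_mem μ' hu'0)
      have h2 : μ'.ord.le (sig μ' F f) (mLT μ' u') := (sig_eq_min μ' F hu'0 hvu').2
      rw [← hσsig, hmu] at *
      exact absurd (@lt_of_le_of_lt _ μ'.ord.toPreorder _ _ _ h2 h1)
        (@lt_irrefl _ μ'.ord.toPreorder σ)
    exact Or.inr ⟨⟨hf0, hnotsyz, hσsig, hsigphi⟩, fun h => hf0 h.1⟩
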